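/- Let G be an Abelian group and A a finite nonempty subset of G with |A+A| ≤ K|A| for some real K < 1.5. Then there exists a finite subgroup H of G with |H| ≤ K|A| such that A is contained in a single coset of H. -/

import Mathlib

open Pointwise Finset

private lemma freiman_key {G : Type*} [AddCommGroup G] [DecidableEq G]
    (A : Finset G) (hlt : 2 * (A + A).card < 3 * A.card)
    {d : G} (hd : d ∈ A - A) :
    A.card < 2 * (A.filter (fun t => t + d ∈ A)).card := by
  obtain ⟨u, hu, v, hv, rfl⟩ := Finset.mem_sub.1 hd
  set X := A.image (fun a => u + a) with hX
  set Y := A.image (fun a => v + a) with hY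
  have hXA : X.card = A.card := Finset.card_image_of_injective _ (add_right_injective u)
  have hYA : Y.card = A.card := Finset.card_image_of_injective _ (add_right_injective v)
  have hsub : X ∪ Y ⊆ A + A := by
    apply Finset.union_subset
    · intro x hx
      obtain ⟨a, ha, rfl⟩ := Finset.mem_image.1 hx
      exact Finset.add_mem_add hu ha
    · intro x hx
      obtain ⟨a, ha, rfl⟩ := Finset.mem_image.1 hx
      exact Finset.add_mem_add hv ha
  have hunion : (X ∪ Y).card + (X ∩ Y).card = 2 * A.card := by
    rw [Finset.card_union_add_card_inter, hXA, hYA]; ring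
  have hinter : (X ∩ Y).card ≤ (A.filter (fun t => t + (u - v) ∈ A)).card := by
    apply Finset.card_le_card_of_injOn (fun w => w - u)
    · intro w hw
      rw [Finset.mem_coe, Finset.mem_inter] at hw
      obtain ⟨hw1, hw2⟩ := hw
      obtain ⟨a, ha, rfl⟩ := Finset.mem_image.1 hw1
      obtain ⟨b, hb, hab⟩ := Finset.mem_image.1 hw2
      rw [Finset.mem_coe, Finset.mem_filter]
      refine ⟨by simpa using ha, ?_⟩
      have : u + a - u + (u - v) = b := by rw [← hab]; abel
      rw [this]; exact hb
    · intro x _ y _ hxy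
      simpa using hxy
  have := Finset.card_le_card hsub
  omega

theorem freiman_small_doubling {G : Type*} [AddCommGroup G] [DecidableEq G]
    (A : Finset G) (hA : A.Nonempty) (K : ℝ) (hK : K < 1.5)
    (h : ((A + A).card : ℝ) ≤ K * A.card) :
    ∃ (H : AddSubgroup G) (x : G), (H : Set G).Finite ∧
      (Nat.card H : ℝ) ≤ K * A.card ∧ (A : Set G) ⊆ x +ᵥ (H : Set G) := by
  obtain ⟨a₀, ha₀⟩ := hA
  have hn : 0 < A.card := Finset.card_pos.2 ⟨a₀, ha₀⟩
  -- numeric: 2|A+A| < 3|A|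
  have hlt : 2 * (A + A).card < 3 * A.card := by
    have : ((A + A).card : ℝ) < 1.5 * A.card := lt_of_le_of_lt h (by
      apply mul_lt_mul_of_pos_right hK
      exact_mod_cast hn)
    have h2 : (2 : ℝ) * (A + A).card < 3 * A.card := by nlinarith
    exact_mod_cast h2
  set D := A - A with hD
  -- closure under addition
  have hclosed : ∀ d₁ ∈ D, ∀ d₂ ∈ D, d₁ + d₂ ∈ D := by
    intro d₁ hd₁ d₂ hd₂
    have hnd₂ : -d₂ ∈ D := by
      obtain ⟨a, ha, b, hb, rfl⟩ := Finset.mem_sub.1 hd₂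
      rw [neg_sub]; exact Finset.sub_mem_sub hb ha
    have h1 := freiman_key A hlt hd₁
    have h2 := freiman_key A hlt hnd₂
    set T₁ := A.filter (fun t => t + d₁ ∈ A) with hT₁
    set T₂ := A.filter (fun t => t + -d₂ ∈ A) with hT₂
    have hsub1 : T₁ ⊆ A := Finset.filter_subset _ _
    have hsub2 : T₂ ⊆ A := Finset.filter_subset _ _
    have hun : (T₁ ∪ T₂).card ≤ A.card :=
      Finset.card_le_card (Finset.union_subset hsub1 hsub2)
    have hint : (T₁ ∩ T₂).Nonempty := by
      rw [← Finset.card_pos]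
      have := Finset.card_union_add_card_inter T₁ T₂
      omega
    obtain ⟨t, ht⟩ := hint
    rw [Finset.mem_inter, hT₁, hT₂, Finset.mem_filter, Finset.mem_filter] at ht
    obtain ⟨⟨_, ht1⟩, ⟨_, ht2⟩⟩ := ht
    have : d₁ + d₂ = (t + d₁) - (t + -d₂) := by abel
    rw [this]
    exact Finset.sub_mem_sub ht1 ht2
  -- |D| < 2|A|
  have hDlt : D.card < 2 * A.card := by
    have hfib : (A ×ˢ A).card = ∑ d ∈ D, ((A ×ˢ A).filter (fun p => p.1 - p.2 = d)).card := by
      apply Finset.card_eq_sum_card_fiberwise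
      intro p hp
      rw [Finset.mem_coe, Finset.mem_product] at hp
      exact Finset.sub_mem_sub hp.1 hp.2
    have hbig : ∀ d ∈ D, A.card < 2 * ((A ×ˢ A).filter (fun p => p.1 - p.2 = d)).card := by
      intro d hd
      have hk := freiman_key A hlt hd
      have : (A.filter (fun t => t + d ∈ A)).card
          ≤ ((A ×ˢ A).filter (fun p => p.1 - p.2 = d)).card := by
        apply Finset.card_le_card_of_injOn (fun t => (t + d, t))
        · intro t ht
          rw [Finset.mem_coe, Finset.mem_filter] at ht
          rw [Finset.mem_coe, Finset.mem_filter, Finset.mem_product]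
          exact ⟨⟨ht.2, ht.1⟩, by simp⟩
        · intro x _ y _ hxy
          exact (Prod.mk.injEq _ _ _ _ ▸ hxy).2
      omega
    have hsum : D.card * (A.card + 1) ≤ 2 * (A ×ˢ A).card := by
      calc D.card * (A.card + 1) = ∑ _d ∈ D, (A.card + 1) := by
            rw [Finset.sum_const, smul_eq_mul]
          _ ≤ ∑ d ∈ D, 2 * ((A ×ˢ A).filter (fun p => p.1 - p.2 = d)).card := by
            apply Finset.sum_le_sum
            intro d hd
            have := hbig d hd
            omega
          _ = 2 * (A ×ˢ A).card := by rw [hfib, Finset.mul_sum]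
    rw [Finset.card_product] at hsum
    nlinarith
  -- |D| ≤ |A+A|
  have hDle : D.card ≤ (A + A).card := by
    have hsub : D ⊆ (A + A).image (fun s => s - (a₀ + a₀)) := by
      intro d hd
      set P := A.image (fun a => a - a₀) with hP
      set Q := A.image (fun b => d + a₀ - b) with hQ
      have hPD : P ⊆ D := by
        intro x hx
        obtain ⟨a, ha, rfl⟩ := Finset.mem_image.1 hx
        exact Finset.sub_mem_sub ha ha₀
      have hQD : Q ⊆ D := by
        intro x hx
        obtain ⟨b, hb, rfl⟩ := Finset.mem_image.1 hx
        have : d + a₀ - b = d + (a₀ - b) := by abel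
        rw [this]
        exact hclosed d hd _ (Finset.sub_mem_sub ha₀ hb)
      have hPc : P.card = A.card := Finset.card_image_of_injective _ (sub_left_injective)
      have hQc : Q.card = A.card := by
        apply Finset.card_image_of_injective
        intro x y hxy
        simpa [sub_left_injective.eq_iff] using hxy
      have hunD : (P ∪ Q).card ≤ D.card := Finset.card_le_card (Finset.union_subset hPD hQD)
      have hint : (P ∩ Q).Nonempty := by
        rw [← Finset.card_pos]
        have := Finset.card_union_add_card_inter P Q
        omega
      obtain ⟨x, hx⟩ := hint
      rw [Finset.mem_inter] at hx
      obtain ⟨hx1, hx2⟩ := hx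
      obtain ⟨a, ha, hax⟩ := Finset.mem_image.1 hx1
      obtain ⟨b, hb, hbx⟩ := Finset.mem_image.1 hx2
      rw [Finset.mem_image]
      refine ⟨a + b, Finset.add_mem_add ha hb, ?_⟩
      have h0 : a - a₀ - (d + a₀ - b) = 0 := by rw [hax, hbx, sub_self]
      have h1 : a + b - (a₀ + a₀) - d = a - a₀ - (d + a₀ - b) := by abel
      show a + b - (a₀ + a₀) = d
      exact sub_eq_zero.1 (h1.trans h0)
    calc D.card ≤ ((A + A).image (fun s => s - (a₀ + a₀))).card := Finset.card_le_card hsub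
      _ ≤ (A + A).card := Finset.card_image_le
  -- build subgroup
  refine ⟨{ carrier := ↑D
            add_mem' := fun {x y} hx hy => hclosed x hx y hy
            zero_mem' := sub_self a₀ ▸ Finset.sub_mem_sub ha₀ ha₀
            neg_mem' := by
              intro x hx
              obtain ⟨a, ha, b, hb, rfl⟩ := Finset.mem_sub.1 hx
              simpa [neg_sub] using Finset.sub_mem_sub hb ha }, a₀,
         D.finite_toSet, ?_, ?_⟩
  · have : (Nat.card (↑D : Set G) : ℝ) = D.card := by
      rw [Nat.card_coe_set_eq, Set.ncard_coe_finset]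
    calc (Nat.card (↑D : Set G) : ℝ) = D.card := this
      _ ≤ (A + A).card := by exact_mod_cast hDle
      _ ≤ K * A.card := h
  · intro a ha
    refine ⟨a - a₀, Finset.sub_mem_sub ha ha₀, by simp⟩
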